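/- T0+ has the amalgamation property: for any models M0, M1, M2 of T0+ and embeddings f1 : M0 → M1 and f2 : M0 → M2, there exist a model M3 of T0+ and embeddings g1 : M1 → M3 and g2 : M2 → M3 with g1 ∘ f1 = g2 ∘ f2. Moreover, T0+ has the joint embedding property: for any two models M1, M2 of T0+ there is a model M3 of T0+ into which both M1 and M2 embed. -/

import Mathlib

/-- A model of the theory `T0+`: the unary predicates `Q0`, `Q1`, `Q2` partition the universe,
`F0 : Q1 → Q0`, `F1 : Q2 × Q0 → Q1`, `F2 : Q0 → Q2`, `F3 : Q2 → Q0` are (total) functions,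
`F0 (F1 z x) = x` whenever `Q2 z` and `Q0 x`, and `F3 (F2 x) = x` whenever `Q0 x`. -/
structure T0PlusModel (M : Type*) where
  Q0 : M → Prop
  Q1 : M → Prop
  Q2 : M → Prop
  F0 : M → M
  F1 : M → M → M
  F2 : M → M
  F3 : M → M
  partition_total : ∀ x, Q0 x ∨ Q1 x ∨ Q2 x
  partition_01 : ∀ x, ¬(Q0 x ∧ Q1 x)
  partition_02 : ∀ x, ¬(Q0 x ∧ Q2 x)
  partition_12 : ∀ x, ¬(Q1 x ∧ Q2 x)
  ax_F0 : ∀ x, Q1 x → Q0 (F0 x)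
  ax_F1 : ∀ z x, Q2 z → Q0 x → Q1 (F1 z x)
  ax_F2 : ∀ x, Q0 x → Q2 (F2 x)
  ax_F3 : ∀ z, Q2 z → Q0 (F3 z)
  ax_F0F1 : ∀ z x, Q2 z → Q0 x → F0 (F1 z x) = x
  ax_F3F2 : ∀ x, Q0 x → F3 (F2 x) = x


/-- An embedding of models of `T0+`: an injective map preserving `Q0`, `Q1`, `Q2` and
commuting with `F0`, `F1`, `F2`, `F3`. -/
def T0PlusModel.IsEmbedding {M N : Type*} (S : T0PlusModel M) (S' : T0PlusModel N)
    (f : M → N) : Prop :=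
  Function.Injective f ∧
  (∀ x, S.Q0 x ↔ S'.Q0 (f x)) ∧
  (∀ x, S.Q1 x ↔ S'.Q1 (f x)) ∧
  (∀ x, S.Q2 x ↔ S'.Q2 (f x)) ∧
  (∀ x, f (S.F0 x) = S'.F0 (f x)) ∧
  (∀ z x, f (S.F1 z x) = S'.F1 (f z) (f x)) ∧
  (∀ x, f (S.F2 x) = S'.F2 (f x)) ∧
  (∀ z, f (S.F3 z) = S'.F3 (f z))

namespace T0Aux

section Amalg
open scoped Classical

variable {M0 M1 M2 : Type} (S1 : T0PlusModel M1) (S2 : T0PlusModel M2)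
  (f1 : M0 → M1) (f2 : M0 → M2)

def AmB : Type := {y : M2 // ¬ ∃ w, f2 w = y}

def AmC : Type :=
  {p : M1 × M2 // S1.Q2 p.1 ∧ (¬ ∃ w, f1 w = p.1) ∧ S2.Q0 p.2 ∧ (¬ ∃ w, f2 w = p.2)} ⊕
  {p : M2 × M1 // S2.Q2 p.1 ∧ (¬ ∃ w, f2 w = p.1) ∧ S1.Q0 p.2 ∧ (¬ ∃ w, f1 w = p.2)}

def AmM : Type := M1 ⊕ (AmB f2 ⊕ AmC S1 S2 f1 f2)

attribute [reducible] AmM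

noncomputable def g2f (y : M2) : AmM S1 S2 f1 f2 :=
  if h : ∃ w, f2 w = y then Sum.inl (f1 h.choose)
  else Sum.inr (Sum.inl (⟨y, h⟩ : AmB f2))

def amQ0 : AmM S1 S2 f1 f2 → Prop
  | .inl a => S1.Q0 a
  | .inr (.inl y) => S2.Q0 y.1
  | .inr (.inr _) => False

def amQ1 : AmM S1 S2 f1 f2 → Prop
  | .inl a => S1.Q1 a
  | .inr (.inl y) => S2.Q1 y.1
  | .inr (.inr _) => True

def amQ2 : AmM S1 S2 f1 f2 → Prop
  | .inl a => S1.Q2 a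
  | .inr (.inl y) => S2.Q2 y.1
  | .inr (.inr _) => False

noncomputable def amF0 : AmM S1 S2 f1 f2 → AmM S1 S2 f1 f2
  | .inl a => .inl (S1.F0 a)
  | .inr (.inl y) => g2f S1 S2 f1 f2 (S2.F0 y.1)
  | .inr (.inr (.inl p)) => .inr (.inl ⟨p.1.2, p.2.2.2.2⟩)
  | .inr (.inr (.inr p)) => .inl p.1.2

noncomputable def amF2 : AmM S1 S2 f1 f2 → AmM S1 S2 f1 f2
  | .inl a => .inl (S1.F2 a)
  | .inr (.inl y) => g2f S1 S2 f1 f2 (S2.F2 y.1)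
  | .inr (.inr c) => .inr (.inr c)

noncomputable def amF3 : AmM S1 S2 f1 f2 → AmM S1 S2 f1 f2
  | .inl a => .inl (S1.F3 a)
  | .inr (.inl y) => g2f S1 S2 f1 f2 (S2.F3 y.1)
  | .inr (.inr c) => .inr (.inr c)

noncomputable def amF1 : AmM S1 S2 f1 f2 → AmM S1 S2 f1 f2 → AmM S1 S2 f1 f2
  | .inl a, .inl b => .inl (S1.F1 a b)
  | .inl a, .inr (.inl y) =>
      if h : ∃ w, f1 w = a then g2f S1 S2 f1 f2 (S2.F1 (f2 h.choose) y.1)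
      else if hq : S1.Q2 a ∧ S2.Q0 y.1 then
        .inr (.inr (.inl ⟨(a, y.1), hq.1, h, hq.2, y.2⟩))
      else .inr (.inl y)
  | .inr (.inl y), .inl a =>
      if h : ∃ w, f1 w = a then g2f S1 S2 f1 f2 (S2.F1 y.1 (f2 h.choose))
      else if hq : S2.Q2 y.1 ∧ S1.Q0 a then
        .inr (.inr (.inr ⟨(y.1, a), hq.1, y.2, hq.2, h⟩))
      else .inl a
  | .inr (.inl y), .inr (.inl y') => g2f S1 S2 f1 f2 (S2.F1 y.1 y'.1)
  | _, x => x

variable {S1 S2 f1 f2}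

section Lemmas

set_option linter.unusedSectionVars false

variable {S0 : T0PlusModel M0} (hf1 : S0.IsEmbedding S1 f1) (hf2 : S0.IsEmbedding S2 f2)

include hf1 hf2

lemma g2f_range (w : M0) : g2f S1 S2 f1 f2 (f2 w) = Sum.inl (f1 w) := by
  have h : ∃ w', f2 w' = f2 w := ⟨w, rfl⟩
  have he : h.choose = w := hf2.1 h.choose_spec
  simp only [g2f, dif_pos h, he]

lemma g2f_notrange {y : M2} (hy : ¬ ∃ w, f2 w = y) :
    g2f S1 S2 f1 f2 y = Sum.inr (Sum.inl (⟨y, hy⟩ : AmB f2)) := dif_neg hy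

lemma g2f_Q0 (y : M2) : S2.Q0 y ↔ amQ0 S1 S2 f1 f2 (g2f S1 S2 f1 f2 y) := by
  by_cases hy : ∃ w, f2 w = y
  · obtain ⟨v, rfl⟩ := hy
    rw [g2f_range hf1 hf2]
    simp only [amQ0]
    rw [← hf2.2.1 v, ← hf1.2.1 v]
  · rw [g2f_notrange hf1 hf2 hy]
    exact Iff.rfl

lemma g2f_Q1 (y : M2) : S2.Q1 y ↔ amQ1 S1 S2 f1 f2 (g2f S1 S2 f1 f2 y) := by
  by_cases hy : ∃ w, f2 w = y
  · obtain ⟨v, rfl⟩ := hy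
    rw [g2f_range hf1 hf2]
    simp only [amQ1]
    rw [← hf2.2.2.1 v, ← hf1.2.2.1 v]
  · rw [g2f_notrange hf1 hf2 hy]
    exact Iff.rfl

lemma g2f_Q2 (y : M2) : S2.Q2 y ↔ amQ2 S1 S2 f1 f2 (g2f S1 S2 f1 f2 y) := by
  by_cases hy : ∃ w, f2 w = y
  · obtain ⟨v, rfl⟩ := hy
    rw [g2f_range hf1 hf2]
    simp only [amQ2]
    rw [← hf2.2.2.2.1 v, ← hf1.2.2.2.1 v]
  · rw [g2f_notrange hf1 hf2 hy]
    exact Iff.rfl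

lemma g2f_inj : Function.Injective (g2f S1 S2 f1 f2) := by
  intro y y' h
  by_cases hy : ∃ w, f2 w = y <;> by_cases hy' : ∃ w, f2 w = y'
  · obtain ⟨v, rfl⟩ := hy
    obtain ⟨v', rfl⟩ := hy'
    rw [g2f_range hf1 hf2, g2f_range hf1 hf2] at h
    have := hf1.1 (Sum.inl.inj h)
    rw [this]
  · obtain ⟨v, rfl⟩ := hy
    rw [g2f_range hf1 hf2, g2f_notrange hf1 hf2 hy'] at h
    simp at h
  · rw [g2f_notrange hf1 hf2 hy] at h
    obtain ⟨v', rfl⟩ := hy'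
    rw [g2f_range hf1 hf2] at h
    simp at h
  · rw [g2f_notrange hf1 hf2 hy, g2f_notrange hf1 hf2 hy'] at h
    have := Sum.inl.inj (Sum.inr.inj h)
    exact congrArg Subtype.val this

lemma g2f_F0 (y : M2) :
    g2f S1 S2 f1 f2 (S2.F0 y) = amF0 S1 S2 f1 f2 (g2f S1 S2 f1 f2 y) := by
  by_cases hy : ∃ w, f2 w = y
  · obtain ⟨v, rfl⟩ := hy
    rw [g2f_range hf1 hf2]
    simp only [amF0]
    rw [← hf2.2.2.2.2.1 v, g2f_range hf1 hf2, hf1.2.2.2.2.1 v]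
  · rw [g2f_notrange hf1 hf2 hy]
    rfl

lemma g2f_F2 (y : M2) :
    g2f S1 S2 f1 f2 (S2.F2 y) = amF2 S1 S2 f1 f2 (g2f S1 S2 f1 f2 y) := by
  by_cases hy : ∃ w, f2 w = y
  · obtain ⟨v, rfl⟩ := hy
    rw [g2f_range hf1 hf2]
    simp only [amF2]
    rw [← hf2.2.2.2.2.2.2.1 v, g2f_range hf1 hf2, hf1.2.2.2.2.2.2.1 v]
  · rw [g2f_notrange hf1 hf2 hy]
    rfl

lemma g2f_F3 (y : M2) :
    g2f S1 S2 f1 f2 (S2.F3 y) = amF3 S1 S2 f1 f2 (g2f S1 S2 f1 f2 y) := by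
  by_cases hy : ∃ w, f2 w = y
  · obtain ⟨v, rfl⟩ := hy
    rw [g2f_range hf1 hf2]
    simp only [amF3]
    rw [← hf2.2.2.2.2.2.2.2 v, g2f_range hf1 hf2, hf1.2.2.2.2.2.2.2 v]
  · rw [g2f_notrange hf1 hf2 hy]
    rfl

lemma g2f_F1 (z x : M2) :
    g2f S1 S2 f1 f2 (S2.F1 z x) = amF1 S1 S2 f1 f2 (g2f S1 S2 f1 f2 z) (g2f S1 S2 f1 f2 x) := by
  by_cases hz : ∃ w, f2 w = z <;> by_cases hx : ∃ w, f2 w = x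
  · obtain ⟨w, rfl⟩ := hz
    obtain ⟨v, rfl⟩ := hx
    rw [g2f_range hf1 hf2, g2f_range hf1 hf2]
    simp only [amF1]
    rw [← hf2.2.2.2.2.2.1 w v, g2f_range hf1 hf2, hf1.2.2.2.2.2.1 w v]
  · obtain ⟨w, rfl⟩ := hz
    rw [g2f_range hf1 hf2, g2f_notrange hf1 hf2 hx]
    simp only [amF1]
    have h : ∃ u, f1 u = f1 w := ⟨w, rfl⟩
    rw [dif_pos h]
    have he : h.choose = w := hf1.1 h.choose_spec
    rw [he]
  · obtain ⟨v, rfl⟩ := hx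
    rw [g2f_range hf1 hf2, g2f_notrange hf1 hf2 hz]
    simp only [amF1]
    have h : ∃ u, f1 u = f1 v := ⟨v, rfl⟩
    rw [dif_pos h]
    have he : h.choose = v := hf1.1 h.choose_spec
    rw [he]
  · rw [g2f_notrange hf1 hf2 hz, g2f_notrange hf1 hf2 hx]
    rfl

lemma q2_of_choose {a : M1} (h : ∃ w, f1 w = a) (hz : S1.Q2 a) : S2.Q2 (f2 h.choose) := by
  rw [← hf2.2.2.2.1]
  rw [hf1.2.2.2.1, h.choose_spec]
  exact hz

lemma q0_of_choose {a : M1} (h : ∃ w, f1 w = a) (hx : S1.Q0 a) : S2.Q0 (f2 h.choose) := by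
  rw [← hf2.2.1]
  rw [hf1.2.1, h.choose_spec]
  exact hx

noncomputable def amModel : T0PlusModel (AmM S1 S2 f1 f2) where
  Q0 := amQ0 S1 S2 f1 f2
  Q1 := amQ1 S1 S2 f1 f2
  Q2 := amQ2 S1 S2 f1 f2
  F0 := amF0 S1 S2 f1 f2
  F1 := amF1 S1 S2 f1 f2
  F2 := amF2 S1 S2 f1 f2
  F3 := amF3 S1 S2 f1 f2
  partition_total := by
    rintro (a | (y | c))
    · exact S1.partition_total a
    · exact S2.partition_total y.1
    · exact Or.inr (Or.inl trivial)
  partition_01 := by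
    rintro (a | (y | c)) h
    · exact S1.partition_01 a h
    · exact S2.partition_01 y.1 h
    · exact h.1
  partition_02 := by
    rintro (a | (y | c)) h
    · exact S1.partition_02 a h
    · exact S2.partition_02 y.1 h
    · exact h.1
  partition_12 := by
    rintro (a | (y | c)) h
    · exact S1.partition_12 a h
    · exact S2.partition_12 y.1 h
    · exact h.2
  ax_F0 := by
    rintro (a | (y | (p | p))) h
    · exact S1.ax_F0 a h
    · exact (g2f_Q0 hf1 hf2 _).mp (S2.ax_F0 _ h)
    · exact p.2.2.2.1
    · exact p.2.2.2.1
  ax_F1 := by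
    rintro (a | (y | c)) (b | (y' | c')) hz hx
    · exact S1.ax_F1 a b hz hx
    · simp only [amF1]
      split_ifs with h hq
      · exact (g2f_Q1 hf1 hf2 _).mp (S2.ax_F1 _ _ (q2_of_choose hf1 hf2 h hz) hx)
      · trivial
      · exact absurd ⟨hz, hx⟩ hq
    · exact hx.elim
    · simp only [amF1]
      split_ifs with h hq
      · exact (g2f_Q1 hf1 hf2 _).mp (S2.ax_F1 _ _ hz (q0_of_choose hf1 hf2 h hx))
      · trivial
      · exact absurd ⟨hz, hx⟩ hq
    · exact (g2f_Q1 hf1 hf2 _).mp (S2.ax_F1 _ _ hz hx)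
    · exact hx.elim
    · exact hz.elim
    · exact hz.elim
    · exact hz.elim
  ax_F2 := by
    rintro (a | (y | c)) h
    · exact S1.ax_F2 a h
    · exact (g2f_Q2 hf1 hf2 _).mp (S2.ax_F2 _ h)
    · exact h.elim
  ax_F3 := by
    rintro (a | (y | c)) h
    · exact S1.ax_F3 a h
    · exact (g2f_Q0 hf1 hf2 _).mp (S2.ax_F3 _ h)
    · exact h.elim
  ax_F0F1 := by
    rintro (a | (⟨y, hy⟩ | c)) (b | (⟨y', hy'⟩ | c')) hz hx
    · simp only [amF1, amF0]
      rw [S1.ax_F0F1 a b hz hx]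
    · simp only [amF1]
      split_ifs with h hq
      · rw [← g2f_F0 hf1 hf2, S2.ax_F0F1 _ _ (q2_of_choose hf1 hf2 h hz) hx,
          g2f_notrange hf1 hf2 hy']
        rfl
      · rfl
      · exact absurd ⟨hz, hx⟩ hq
    · exact hx.elim
    · simp only [amF1]
      split_ifs with h hq
      · rw [← g2f_F0 hf1 hf2, S2.ax_F0F1 _ _ hz (q0_of_choose hf1 hf2 h hx),
          g2f_range hf1 hf2, h.choose_spec]
      · rfl
      · exact absurd ⟨hz, hx⟩ hq
    · simp only [amF1]
      rw [← g2f_F0 hf1 hf2, S2.ax_F0F1 _ _ hz hx, g2f_notrange hf1 hf2 hy']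
      rfl
    · exact hx.elim
    · exact hz.elim
    · exact hz.elim
    · exact hz.elim
  ax_F3F2 := by
    rintro (a | (⟨y, hy⟩ | c)) hx
    · simp only [amF2, amF3]
      rw [S1.ax_F3F2 a hx]
    · simp only [amF2]
      rw [← g2f_F3 hf1 hf2, S2.ax_F3F2 _ hx, g2f_notrange hf1 hf2 hy]
      rfl
    · exact hx.elim

lemma g1_emb : S1.IsEmbedding (amModel hf1 hf2) Sum.inl := by
  refine ⟨fun a b h => Sum.inl.inj h, fun x => Iff.rfl, fun x => Iff.rfl, fun x => Iff.rfl,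
    fun x => rfl, fun z x => rfl, fun x => rfl, fun z => rfl⟩

lemma g2_emb : S2.IsEmbedding (amModel hf1 hf2) (g2f S1 S2 f1 f2) :=
  ⟨g2f_inj hf1 hf2, g2f_Q0 hf1 hf2, g2f_Q1 hf1 hf2, g2f_Q2 hf1 hf2,
    g2f_F0 hf1 hf2, g2f_F1 hf1 hf2, g2f_F2 hf1 hf2, g2f_F3 hf1 hf2⟩

end Lemmas
end Amalg

def emptyModel : T0PlusModel Empty where
  Q0 := fun _ => False
  Q1 := fun _ => False
  Q2 := fun _ => False
  F0 := id
  F1 := fun _ x => x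
  F2 := id
  F3 := id
  partition_total := fun x => x.elim
  partition_01 := fun x => x.elim
  partition_02 := fun x => x.elim
  partition_12 := fun x => x.elim
  ax_F0 := fun x => x.elim
  ax_F1 := fun z => z.elim
  ax_F2 := fun x => x.elim
  ax_F3 := fun x => x.elim
  ax_F0F1 := fun z => z.elim
  ax_F3F2 := fun x => x.elim

lemma empty_emb {M : Type} (S : T0PlusModel M) :
    emptyModel.IsEmbedding S (fun x => x.elim) :=
  ⟨fun a => a.elim, fun x => x.elim, fun x => x.elim, fun x => x.elim,
    fun x => x.elim, fun z => z.elim, fun x => x.elim, fun z => z.elim⟩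

end T0Aux

/-- `T0+` has the amalgamation property and the joint embedding property. -/
theorem t0Plus_amalgamation_and_jep :
    (∀ (M0 M1 M2 : Type) (S0 : T0PlusModel M0) (S1 : T0PlusModel M1) (S2 : T0PlusModel M2)
      (f1 : M0 → M1) (f2 : M0 → M2),
      S0.IsEmbedding S1 f1 → S0.IsEmbedding S2 f2 →
      ∃ (M3 : Type) (S3 : T0PlusModel M3) (g1 : M1 → M3) (g2 : M2 → M3),
        S1.IsEmbedding S3 g1 ∧ S2.IsEmbedding S3 g2 ∧ g1 ∘ f1 = g2 ∘ f2) ∧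
    (∀ (M1 M2 : Type) (S1 : T0PlusModel M1) (S2 : T0PlusModel M2),
      ∃ (M3 : Type) (S3 : T0PlusModel M3) (g1 : M1 → M3) (g2 : M2 → M3),
        S1.IsEmbedding S3 g1 ∧ S2.IsEmbedding S3 g2) := by
  have amalg : ∀ (M0 M1 M2 : Type) (S0 : T0PlusModel M0) (S1 : T0PlusModel M1)
      (S2 : T0PlusModel M2) (f1 : M0 → M1) (f2 : M0 → M2),
      S0.IsEmbedding S1 f1 → S0.IsEmbedding S2 f2 →
      ∃ (M3 : Type) (S3 : T0PlusModel M3) (g1 : M1 → M3) (g2 : M2 → M3),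
        S1.IsEmbedding S3 g1 ∧ S2.IsEmbedding S3 g2 ∧ g1 ∘ f1 = g2 ∘ f2 := by
    intro M0 M1 M2 S0 S1 S2 f1 f2 hf1 hf2
    refine ⟨T0Aux.AmM S1 S2 f1 f2, T0Aux.amModel hf1 hf2, Sum.inl, T0Aux.g2f S1 S2 f1 f2,
      T0Aux.g1_emb hf1 hf2, T0Aux.g2_emb hf1 hf2, ?_⟩
    funext w
    exact (T0Aux.g2f_range hf1 hf2 w).symm
  refine ⟨amalg, fun M1 M2 S1 S2 => ?_⟩
  obtain ⟨M3, S3, g1, g2, h1, h2, -⟩ :=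
    amalg Empty M1 M2 T0Aux.emptyModel S1 S2 (fun x => x.elim) (fun x => x.elim)
      (T0Aux.empty_emb S1) (T0Aux.empty_emb S2)
  exact ⟨M3, S3, g1, g2, h1, h2⟩
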